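/- A simplicial complex Δ is shifted with respect to an ordered set of vertices {v_1 < ... < v_t} if and only if Δ is a t-fold near-cone with respect to {v_1 < ... < v_t}. -/

import Mathlib

open Finset

/-- A (finite, abstract) simplicial complex: a nonempty collection of finite
sets closed under taking subsets. -/
def IsComplex {α : Type} [DecidableEq α] (Δ : Finset (Finset α)) : Prop :=
  Δ.Nonempty ∧ ∀ A ∈ Δ, ∀ B ⊆ A, B ∈ Δ

/-- The link of a face `S` in `Δ`. -/
def link {α : Type} [DecidableEq α] (Δ : Finset (Finset α)) (S : Finset α) :
    Finset (Finset α) :=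
  Δ.filter fun F => Disjoint F S ∧ F ∪ S ∈ Δ

/-- The deletion of a vertex `v` from `Δ`. -/
def del {α : Type} [DecidableEq α] (Δ : Finset (Finset α)) (v : α) :
    Finset (Finset α) :=
  Δ.filter fun F => v ∉ F

/-- A facet: a maximal face. -/
def IsFacet {α : Type} (Δ : Finset (Finset α)) (A : Finset α) : Prop :=
  A ∈ Δ ∧ ∀ B ∈ Δ, A ⊆ B → B = A

/-- Vertex-decomposability: `Δ` is a simplex, or has a shedding vertex `v`
(every face containing `v` admits an exchange) whose deletion and link are
both vertex-decomposable. -/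
inductive VertexDecomposable {α : Type} [DecidableEq α] :
    Finset (Finset α) → Prop
  | simplex (A : Finset α) : VertexDecomposable A.powerset
  | shed (Δ : Finset (Finset α)) (v : α)
      (hshed : ∀ A ∈ Δ, v ∈ A → ∃ w, w ≠ v ∧ w ∉ A ∧ insert w (A.erase v) ∈ Δ)
      (hdel : VertexDecomposable (del Δ v))
      (hlink : VertexDecomposable (link Δ {v})) :
      VertexDecomposable Δ


/-- `Δ` is shifted with respect to the ordered vertices `vs = [v_1 < ⋯ < v_t]`:
whenever `B ∈ Δ`, `w ∈ B`, `w ∉ {v_1,...,v_i}`, and `v_i ∉ B`, then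
`(B \ {w}) ∪ {v_i} ∈ Δ`. -/
def ShiftedWrt {α : Type} [DecidableEq α] (Δ : Finset (Finset α))
    (vs : List α) : Prop :=
  ∀ i, (hi : i < vs.length) → ∀ B ∈ Δ, ∀ w ∈ B, w ∉ vs.take (i + 1) →
    vs.get ⟨i, hi⟩ ∉ B → insert (vs.get ⟨i, hi⟩) (B.erase w) ∈ Δ

/-- `Δ` is a `t`-fold near-cone with respect to `[v_1 < ⋯ < v_t]`: either
`t = 0`, or `Δ` is a near-cone with apex `v_1` and both `del(Δ, v_1)` and
`link(Δ, v_1)` are `(t-1)`-fold near-cones with respect to `[v_2 < ⋯ < v_t]`. -/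
def NearConeFold {α : Type} [DecidableEq α] :
    Finset (Finset α) → List α → Prop
  | _, [] => True
  | Δ, v :: vs =>
      (∀ B ∈ Δ, ∀ w ∈ B, insert v (B.erase w) ∈ Δ) ∧
      NearConeFold (del Δ v) vs ∧ NearConeFold (link Δ {v}) vs

lemma shifted_iff_ncf_aux {α : Type} [LinearOrder α] (vs : List α) :
    ∀ (Δ : Finset (Finset α)), (∀ A ∈ Δ, ∀ B ⊆ A, B ∈ Δ) →
    vs.Pairwise (· < ·) → (ShiftedWrt Δ vs ↔ NearConeFold Δ vs) := by
  induction vs with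
  | nil =>
    intro Δ _ _
    constructor
    · intro _; trivial
    · intro _ i hi; simp at hi
  | cons v vs ih =>
    intro Δ hΔ hp
    have hvlt : ∀ x ∈ vs, v < x := (List.pairwise_cons.mp hp).1
    have htail : vs.Pairwise (· < ·) := (List.pairwise_cons.mp hp).2
    have hdelC : ∀ A ∈ del Δ v, ∀ B ⊆ A, B ∈ del Δ v := by
      intro A hA B hB
      simp only [del, mem_filter] at *
      exact ⟨hΔ A hA.1 B hB, fun h => hA.2 (hB h)⟩
    have hlinkC : ∀ A ∈ link Δ {v}, ∀ B ⊆ A, B ∈ link Δ {v} := by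
      intro A hA B hB
      simp only [link, mem_filter] at *
      refine ⟨hΔ A hA.1 B hB,
        Finset.disjoint_left.mpr fun a ha hb =>
          Finset.disjoint_left.mp hA.2.1 (hB ha) hb,
        hΔ _ hA.2.2 _ (Finset.union_subset_union hB (subset_refl _))⟩
    show _ ↔ (_ ∧ NearConeFold (del Δ v) vs ∧ NearConeFold (link Δ {v}) vs)
    rw [← ih (del Δ v) hdelC htail, ← ih (link Δ {v}) hlinkC htail]
    constructor
    · intro hS
      refine ⟨?_, ?_, ?_⟩
      · -- near-cone at v
        intro B hB w hw
        by_cases hvB : v ∈ B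
        · refine hΔ B hB _ (fun x hx => ?_)
          rcases Finset.mem_insert.mp hx with rfl | hx
          · exact hvB
          · exact Finset.mem_of_mem_erase hx
        · by_cases hwv : w = v
          · exact absurd (hwv ▸ hw) hvB
          · have := hS 0 (by simp) B hB w hw (by simp [hwv]) (by simpa using hvB)
            simpa using this
      · -- del
        intro i hi B hB w hw hwt hvi
        have hB1 : B ∈ Δ := (mem_filter.mp hB).1
        have hvB : v ∉ B := (mem_filter.mp hB).2
        have hwv : w ≠ v := fun h => hvB (h ▸ hw)
        have hvilt : v < vs.get ⟨i, hi⟩ := hvlt _ (List.get_mem vs ⟨i, hi⟩)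
        have h := hS (i + 1) (by simpa using Nat.succ_lt_succ hi) B hB1 w hw
          (by simpa [List.take_succ_cons] using ⟨hwv, hwt⟩) hvi
        simp only [del, mem_filter]
        refine ⟨h, ?_⟩
        simp only [Finset.mem_insert, Finset.mem_erase]
        rintro (rfl | ⟨-, hvB'⟩)
        · exact absurd rfl (ne_of_lt hvilt)
        · exact hvB hvB'
      · -- link
        intro i hi B hB w hw hwt hvi
        have hB1 : B ∈ Δ := (mem_filter.mp hB).1
        have hdis : Disjoint B {v} := (mem_filter.mp hB).2.1
        have hBu : B ∪ {v} ∈ Δ := (mem_filter.mp hB).2.2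
        have hvB : v ∉ B := fun h => Finset.disjoint_left.mp hdis h (mem_singleton_self v)
        have hwv : w ≠ v := fun h => hvB (h ▸ hw)
        set vi := vs.get ⟨i, hi⟩ with hvi_def
        have hvilt : v < vi := hvlt _ (List.get_mem vs ⟨i, hi⟩)
        have hviv : vi ≠ v := (ne_of_lt hvilt).symm
        have h := hS (i + 1) (by simpa using Nat.succ_lt_succ hi) (B ∪ {v})
          (hBu) w (Finset.mem_union_left _ hw)
          (by simpa [List.take_succ_cons] using ⟨hwv, hwt⟩)
          (by simp; exact ⟨hviv, hvi⟩)
        have heq : insert vi ((B ∪ {v}).erase w) = insert vi (B.erase w) ∪ {v} := by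
          ext a
          simp only [Finset.mem_insert, Finset.mem_erase, Finset.mem_union,
            Finset.mem_singleton]
          constructor
          · rintro (rfl | ⟨haw, (haB | rfl)⟩)
            · exact Or.inl (Or.inl rfl)
            · exact Or.inl (Or.inr ⟨haw, haB⟩)
            · exact Or.inr rfl
          · rintro ((rfl | ⟨haw, haB⟩) | rfl)
            · exact Or.inl rfl
            · exact Or.inr ⟨haw, Or.inl haB⟩
            · exact Or.inr ⟨hwv.symm, Or.inr rfl⟩
        have h' : insert vi ((B ∪ {v}).erase w) ∈ Δ := h
        rw [heq] at h'
        have hmemΔ : insert vi (B.erase w) ∈ Δ :=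
          hΔ _ h' _ Finset.subset_union_left
        simp only [link, mem_filter]
        refine ⟨hmemΔ, Finset.disjoint_left.mpr ?_, h'⟩
        intro a ha hb
        rw [Finset.mem_singleton] at hb
        subst hb
        rcases Finset.mem_insert.mp ha with h' | h'
        · exact hviv h'.symm
        · exact hvB (Finset.mem_of_mem_erase h')
    · rintro ⟨hnc, hdel, hlink⟩
      intro i hi B hB w hw hwt hvi
      match i with
      | 0 =>
        exact hnc B hB w hw
      | j + 1 =>
        have hj : j < vs.length := by simpa using hi
        set vj := vs.get ⟨j, hj⟩ with hvj_def
        have hget : (v :: vs).get ⟨j + 1, hi⟩ = vj := rfl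
        rw [hget] at hvi ⊢
        have hwt' : w ≠ v ∧ w ∉ vs.take (j + 1) := by
          simpa [List.take_succ_cons] using hwt
        have hvjlt : v < vj := hvlt _ (List.get_mem vs ⟨j, hj⟩)
        have hvjv : vj ≠ v := (ne_of_lt hvjlt).symm
        by_cases hvB : v ∈ B
        · -- use link
          have hBl : B.erase v ∈ link Δ {v} := by
            simp only [link, mem_filter]
            refine ⟨hΔ B hB _ (Finset.erase_subset _ _), ?_, ?_⟩
            · exact Finset.disjoint_singleton_right.mpr (Finset.notMem_erase v B)
            · have : B.erase v ∪ {v} = B := by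
                ext a
                simp only [Finset.mem_union, Finset.mem_erase, Finset.mem_singleton]
                constructor
                · rintro (⟨-, h⟩ | rfl) <;> [exact h; exact hvB]
                · intro h
                  by_cases hav : a = v
                  · exact Or.inr hav
                  · exact Or.inl ⟨hav, h⟩
              rw [this]; exact hB
          have hwl : w ∈ B.erase v := Finset.mem_erase.mpr ⟨hwt'.1, hw⟩
          have hvjl : vj ∉ B.erase v := fun h => hvi (Finset.mem_of_mem_erase h)
          have h := hlink j hj _ hBl w hwl hwt'.2 hvjl
          simp only [link, mem_filter] at h
          have hu := h.2.2
          have heq : insert vj ((B.erase v).erase w) ∪ {v} = insert vj (B.erase w) := by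
            ext a
            simp only [Finset.mem_union, Finset.mem_insert, Finset.mem_erase,
              Finset.mem_singleton]
            constructor
            · rintro ((rfl | ⟨haw, hav, haB⟩) | rfl)
              · exact Or.inl rfl
              · exact Or.inr ⟨haw, haB⟩
              · exact Or.inr ⟨hwt'.1.symm, hvB⟩
            · rintro (rfl | ⟨haw, haB⟩)
              · exact Or.inl (Or.inl rfl)
              · by_cases hav : a = v
                · exact Or.inr hav
                · exact Or.inl (Or.inr ⟨haw, hav, haB⟩)
          rw [heq] at hu
          exact hu
        · -- use del
          have hBd : B ∈ del Δ v := mem_filter.mpr ⟨hB, hvB⟩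
          have h := hdel j hj B hBd w hw hwt'.2 hvi
          exact (mem_filter.mp h).1

/-- **Shifted with respect to an ordered vertex set = iterated near-cone.**
A simplicial complex `Δ` is shifted with respect to `{v_1 < ⋯ < v_t}` if and
only if `Δ` is a `t`-fold near-cone with respect to `{v_1 < ⋯ < v_t}`. -/
theorem shiftedWrt_iff_nearConeFold {α : Type} [LinearOrder α]
    (Δ : Finset (Finset α)) (hΔ : IsComplex Δ)
    (vs : List α) (hvs : vs.Chain' (· < ·)) :
    ShiftedWrt Δ vs ↔ NearConeFold Δ vs := by
  exact shifted_iff_ncf_aux vs Δ hΔ.2 (List.isChain_iff_pairwise.mp hvs)
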